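/- Let K = ℚ(√5) ⊆ ℝ and let φ = (1 + √5)/2 ∈ K. For every prime number p, consider the quaternion algebra B = ( −φ, p / K ) over K, i.e., the K-algebra with basis 1, i, j, ij satisfying i² = −φ, j² = p, and ji = −ij. Then there exists an element c ∈ B with c ∉ K·1 such that c² = s·1 for some s ∈ K, and s is totally negative: both field embeddings σ : K → ℝ satisfy σ(s) < 0. -/

import Mathlib

open Quaternion

/-- The real quadratic field `K = ℚ(√5) ⊆ ℝ`. -/
noncomputable def Ksqrt5 : IntermediateField ℚ ℝ :=
  IntermediateField.adjoin ℚ {Real.sqrt 5}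

/-- The golden ratio `φ = (1 + √5) / 2` as an element of `ℚ(√5)`. -/
noncomputable def phi : Ksqrt5 :=
  ⟨(1 + Real.sqrt 5) / 2, by
    have h2 : (2 : ℝ) ∈ Ksqrt5 := by
      have := add_mem (one_mem Ksqrt5) (one_mem Ksqrt5)
      norm_num at this ⊢
    exact div_mem (add_mem (one_mem _)
      (IntermediateField.subset_adjoin ℚ _ (Set.mem_singleton _))) h2⟩

lemma key_totally_neg (p : ℕ) (hp : 2 ≤ p) (t : ℝ) (ht : t * t = t + 1) :
    t * ((p : ℝ) * ((t - 1) ^ p) ^ 2 - 1) < 0 := by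
  have ht1 : t * (t - 1) = 1 := by ring_nf; linarith [ht]
  have htne : t ≠ 0 := by rintro rfl; simp at ht1
  have h4 : (p : ℝ) < 2 ^ p := by exact_mod_cast (Nat.lt_two_pow_self (n := p))
  rcases lt_or_gt_of_ne htne with hneg | hpos
  · have h2 : (2 : ℝ) < (t - 1) ^ 2 := by nlinarith
    have h3 : (2 : ℝ) ^ p ≤ ((t - 1) ^ 2) ^ p :=
      pow_le_pow_left₀ (by norm_num) (le_of_lt h2) p
    have h5 : (1 : ℝ) < (p : ℝ) * ((t - 1) ^ p) ^ 2 := by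
      rw [← pow_mul, mul_comm p 2, pow_mul]
      have hp2 : (2 : ℝ) ≤ (p : ℝ) := by exact_mod_cast hp
      have h1 : (1 : ℝ) ≤ 2 ^ p := one_le_pow₀ one_le_two
      have hmm : (2:ℝ) * 2 ^ p ≤ (p : ℝ) * ((t - 1) ^ 2) ^ p :=
        mul_le_mul hp2 h3 (by positivity) (by linarith)
      linarith
    nlinarith
  · have ht2 : 1 < t := by nlinarith
    have htt : (2 : ℝ) < t * t := by nlinarith
    have h5 : (2 : ℝ) ^ p < (t * t) ^ p := pow_lt_pow_left₀ htt (by norm_num) (by omega)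
    have h6 : ((t - 1) ^ p) ^ 2 * (t * t) ^ p = 1 := by
      have h : t ^ p * (t - 1) ^ p = 1 := by rw [← mul_pow, ht1, one_pow]
      calc ((t - 1) ^ p) ^ 2 * (t * t) ^ p = (t ^ p * (t-1)^p)^2 := by ring
      _ = 1 := by rw [h]; norm_num
    have hA : 0 < ((t - 1) ^ p) ^ 2 := pow_pos (pow_pos (sub_pos.2 ht2) p) 2
    have hlt : (p : ℝ) * ((t - 1) ^ p) ^ 2 < 1 := by nlinarith
    nlinarith

lemma phi_mul_phi : phi * phi = phi + 1 := by
  have h5 : Real.sqrt 5 * Real.sqrt 5 = 5 := Real.mul_self_sqrt (by norm_num)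
  apply Subtype.ext
  push_cast [phi]
  nlinarith [h5]

/-- In the quaternion algebra `B = (-φ, p / ℚ(√5))` (with `i² = -φ`, `j² = p`, `ji = -ij`),
there exists an element `c ∉ K·1` whose square is a totally negative scalar `s ∈ K`. -/
theorem exists_totally_negative_square_sqrt5 (p : ℕ) (hp : p.Prime) :
    ∃ c : ℍ[Ksqrt5, -phi, (p : Ksqrt5)],
      c ∉ Set.range (algebraMap Ksqrt5 ℍ[Ksqrt5, -phi, (p : Ksqrt5)]) ∧
      ∃ s : Ksqrt5, c ^ 2 = algebraMap Ksqrt5 ℍ[Ksqrt5, -phi, (p : Ksqrt5)] s ∧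
        ∀ σ : Ksqrt5 →+* ℝ, σ s < 0 := by
  refine ⟨⟨0, 1, 0, (phi - 1) ^ p⟩, ?_, phi * ((p : Ksqrt5) * ((phi - 1) ^ p) ^ 2 - 1),
    ?_, ?_⟩
  · rintro ⟨x, hx⟩
    have := congrArg QuaternionAlgebra.imI hx
    rw [QuaternionAlgebra.algebraMap_eq] at this
    simp at this
  · rw [pow_two, QuaternionAlgebra.algebraMap_eq]
    ext <;> simp <;> ring
  · intro σ
    have hphi : σ phi * σ phi = σ phi + 1 := by
      rw [← map_mul, phi_mul_phi, map_add, map_one]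
    have := key_totally_neg p hp.two_le (σ phi) hphi
    calc σ (phi * ((p : Ksqrt5) * ((phi - 1) ^ p) ^ 2 - 1))
        = σ phi * ((p : ℝ) * ((σ phi - 1) ^ p) ^ 2 - 1) := by
          simp [map_mul, map_sub, map_pow, map_one, map_natCast]
      _ < 0 := this
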